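/- Let (a_k) and (b_k) be two sequences of positive integers with a_k ≡ b_k (mod 4) for all k ≥ 0, and let (s_k, t_k) and (u_k, v_k) be the corresponding continued fraction numerator/denominator sequences. Then for every k, t_k is odd if and only if v_k is odd, and when t_k and v_k are odd, the Jacobi symbols satisfy (s_k / t_k) = (u_k / v_k). -/

import Mathlib

set_option maxHeartbeats 1000000


private lemma half_par {m M : ℕ} (hm : m % 2 = 1) (h4 : m % 4 = M % 4) :
    m / 2 % 2 = M / 2 % 2 := by omega

private lemma npow_congr {x y x' y' : ℕ} (hx : x % 2 = x' % 2) (hy : y % 2 = y' % 2) :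
    ((-1:ℤ))^(x*y) = (-1)^(x'*y') := by
  have h : (x*y) % 2 = (x'*y') % 2 := by rw [Nat.mul_mod, hx, hy, ← Nat.mul_mod]
  rcases Nat.even_or_odd (x*y) with he | ho
  · rw [he.neg_one_pow, (Nat.even_iff.mpr (by rw [← h]; exact Nat.even_iff.mp he)).neg_one_pow]
  · rw [ho.neg_one_pow, (Nat.odd_iff.mpr (by rw [← h]; exact Nat.odd_iff.mp ho)).neg_one_pow]

private lemma chi4_congr {m M : ℕ} (h : m % 4 = M % 4) :
    (ZMod.χ₄ (m : ZMod 4) : ℤ) = ZMod.χ₄ (M : ZMod 4) := by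
  have : ((m : ZMod 4)) = (M : ZMod 4) := (ZMod.natCast_eq_natCast_iff m M 4).mpr h
  rw [this]

private lemma jacobi_step {t n : ℕ} (ht : t % 2 = 0) (hn : n % 2 = 1) :
    jacobiSym (t : ℤ) (n + t) =
      (ZMod.χ₄ ((n + t : ℕ) : ZMod 4) : ℤ) * (-1)^((n/2) * ((n+t)/2)) * jacobiSym (t : ℤ) n := by
  have hnt : Odd (n+t) := Nat.odd_iff.mpr (by omega)
  have hno : Odd n := Nat.odd_iff.mpr hn
  have e1 : ((t:ℤ)) % (((n+t : ℕ)) : ℤ) = (-(n:ℤ)) % (((n+t:ℕ)):ℤ) := by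
    have e : (t:ℤ) = -(n:ℤ) + (((n+t:ℕ)):ℤ) * 1 := by push_cast; ring
    rw [e, Int.add_mul_emod_self_left]
  rw [jacobiSym.mod_left' e1, show (-(n:ℤ)) = -1 * (n:ℕ) by ring, jacobiSym.mul_left,
    jacobiSym.at_neg_one hnt, jacobiSym.quadratic_reciprocity hno hnt]
  have e2 : ((((n+t:ℕ)):ℤ)) % ((n:ℕ):ℤ) = (((t:ℕ)):ℤ) % ((n:ℕ):ℤ) := by
    have e : (((n+t:ℕ)):ℤ) = ((t:ℕ):ℤ) + ((n:ℕ):ℤ)*1 := by push_cast; ring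
    rw [e, Int.add_mul_emod_self_left]
  rw [jacobiSym.mod_left' e2]
  ring

private lemma jacobi_lin {t T r R : ℕ} (ht : t % 2 = 0) (hT : T % 2 = 0)
    (hr : r % 2 = 1) (hR : R % 2 = 1) (h4t : t % 4 = T % 4) (h4r : r % 4 = R % 4)
    (hJ : jacobiSym (t : ℤ) r = jacobiSym (T : ℤ) R) :
    ∀ α : ℕ, jacobiSym (t : ℤ) (α * t + r) = jacobiSym (T : ℤ) (α * T + R) := by
  intro α
  induction α with
  | zero => simpa using hJ
  | succ α ih =>
    have hn : (α*t + r) % 2 = 1 := by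
      have : (α*t) % 2 = 0 := by rw [Nat.mul_mod, ht]; simp
      omega
    have hN : (α*T + R) % 2 = 1 := by
      have : (α*T) % 2 = 0 := by rw [Nat.mul_mod, hT]; simp
      omega
    have h4n : (α*t + r) % 4 = (α*T + R) % 4 :=
      Nat.ModEq.add (Nat.ModEq.mul_left α h4t) h4r
    have h4n' : (α*t + r + t) % 4 = (α*T + R + T) % 4 := Nat.ModEq.add h4n h4t
    have e : (α+1)*t + r = (α*t + r) + t := by ring
    have E : (α+1)*T + R = (α*T + R) + T := by ring
    rw [e, E, jacobi_step ht hn, jacobi_step hT hN, ih, chi4_congr h4n',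
      npow_congr (half_par hn h4n) (half_par (by omega) h4n')]

-- the "even t2" case, abstract version over ℕ
private lemma even_case {t1 t2 t3 u1 u2 u3 α β : ℕ}
    (ht3 : t3 = α * t2 + t1) (hu3 : u3 = β * u2 + u1)
    (h2e : t2 % 2 = 0) (hU2e : u2 % 2 = 0)
    (h1o : t1 % 2 = 1) (hU1o : u1 % 2 = 1)
    (h3o : t3 % 2 = 1) (hU3o : u3 % 2 = 1)
    (h41 : t1 % 4 = u1 % 4) (h42 : t2 % 4 = u2 % 4) (h4a : α % 4 = β % 4)
    (hlt : t1 < t2) (hLT : u1 < u2)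
    (hJ : jacobiSym (t2:ℤ) t1 = jacobiSym (u2:ℤ) u1) :
    jacobiSym (t2:ℤ) t3 = jacobiSym (u2:ℤ) u3 := by
  have modred : ∀ (x n2 n1 : ℕ), n1 < n2 →
      (x * n2 + n1) % (4 * n2) = (x % 4) * n2 + n1 := by
    intro x n2 n1 hlt'
    have hdec : x = 4 * (x / 4) + x % 4 := (Nat.div_add_mod x 4).symm
    have e : x * n2 + n1 = ((x % 4) * n2 + n1) + (4 * n2) * (x / 4) := by
      nth_rewrite 1 [hdec]; ring
    rw [e, Nat.add_mul_mod_self_left]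
    have : (x % 4) * n2 ≤ 3 * n2 := Nat.mul_le_mul_right _ (by omega)
    exact Nat.mod_eq_of_lt (by omega)
  rw [jacobiSym.mod_right' t2 (Nat.odd_iff.mpr h3o), jacobiSym.mod_right' u2 (Nat.odd_iff.mpr hU3o),
    ht3, hu3, modred _ _ _ hlt, modred _ _ _ hLT, h4a]
  exact jacobi_lin h2e hU2e h1o hU1o h42 h41 hJ (β % 4)

-- the "odd t2, odd t3" case, abstract version over ℕ
private lemma odd_case {t1 t2 t3 u1 u2 u3 : ℕ}
    (h2o : t2 % 2 = 1) (hU2o : u2 % 2 = 1)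
    (h3o : t3 % 2 = 1) (hU3o : u3 % 2 = 1)
    (h42 : t2 % 4 = u2 % 4) (h43 : t3 % 4 = u3 % 4)
    (hm : ((t3:ℤ)) % (t2:ℤ) = (t1:ℤ) % (t2:ℤ)) (hM : ((u3:ℤ)) % (u2:ℤ) = (u1:ℤ) % (u2:ℤ))
    (hJ : jacobiSym (t1:ℤ) t2 = jacobiSym (u1:ℤ) u2) :
    jacobiSym (t2:ℤ) t3 = jacobiSym (u2:ℤ) u3 := by
  rw [jacobiSym.quadratic_reciprocity (Nat.odd_iff.mpr h2o) (Nat.odd_iff.mpr h3o),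
    jacobiSym.quadratic_reciprocity (Nat.odd_iff.mpr hU2o) (Nat.odd_iff.mpr hU3o),
    jacobiSym.mod_left' hm, jacobiSym.mod_left' hM, hJ,
    npow_congr (half_par h2o h42) (half_par h3o h43)]

/-- Numerators of continued fraction convergents: `cfS a k = s_k`
(with `s_{-1} = 1`, `s_0 = a_0`, `s_k = a_k s_{k-1} + s_{k-2}`). -/
def cfS (a : ℕ → ℤ) : ℕ → ℤ
  | 0 => a 0
  | 1 => a 1 * a 0 + 1
  | (k+2) => a (k+2) * cfS a (k+1) + cfS a k

/-- Denominators of continued fraction convergents: `cfT a k = t_k`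
(with `t_{-1} = 0`, `t_0 = 1`, `t_k = a_k t_{k-1} + t_{k-2}`). -/
def cfT (a : ℕ → ℤ) : ℕ → ℤ
  | 0 => 1
  | 1 => a 1
  | (k+2) => a (k+2) * cfT a (k+1) + cfT a k

private lemma cfT_pos (a : ℕ → ℤ) (ha : ∀ i, 1 ≤ i → 0 < a i) : ∀ k, 0 < cfT a k := by
  have key : ∀ k, 0 < cfT a k ∧ 0 < cfT a (k+1) := by
    intro k
    induction k with
    | zero => exact ⟨one_pos, ha 1 le_rfl⟩
    | succ k ih =>
      refine ⟨ih.2, ?_⟩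
      show 0 < a (k+2) * cfT a (k+1) + cfT a k
      have := ha (k+2) (by omega)
      exact add_pos (mul_pos this ih.2) ih.1
  exact fun k => (key k).1

private lemma cfT_le (a : ℕ → ℤ) (ha : ∀ i, 1 ≤ i → 0 < a i) :
    ∀ k, cfT a k ≤ cfT a (k+1) := by
  intro k
  cases k with
  | zero => show (1:ℤ) ≤ a 1; exact ha 1 le_rfl
  | succ k =>
    show cfT a (k+1) ≤ a (k+2) * cfT a (k+1) + cfT a k
    have h1 : 1 ≤ a (k+2) := ha (k+2) (by omega)
    have h2 : 0 < cfT a (k+1) := cfT_pos a ha (k+1)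
    have h3 : 0 < cfT a k := cfT_pos a ha k
    nlinarith

private lemma cfDet (a : ℕ → ℤ) :
    ∀ k, cfS a (k+1) * cfT a k - cfS a k * cfT a (k+1) = (-1)^k := by
  intro k
  induction k with
  | zero => show (a 1 * a 0 + 1) * 1 - a 0 * a 1 = (-1)^0; ring
  | succ k ih =>
    show (a (k+2) * cfS a (k+1) + cfS a k) * cfT a (k+1)
        - cfS a (k+1) * (a (k+2) * cfT a (k+1) + cfT a k) = (-1)^(k+1)
    rw [pow_succ]
    linear_combination (-1) * ih

private lemma cfT_coprime (a : ℕ → ℤ) :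
    ∀ k, Int.gcd (cfT a k) (cfT a (k+1)) = 1 := by
  intro k
  have h := cfDet a k
  have hd1 : (Int.gcd (cfT a k) (cfT a (k+1)) : ℤ) ∣ cfT a k := Int.gcd_dvd_left _ _
  have hd2 : (Int.gcd (cfT a k) (cfT a (k+1)) : ℤ) ∣ cfT a (k+1) := Int.gcd_dvd_right _ _
  have hdvd : (Int.gcd (cfT a k) (cfT a (k+1)) : ℤ) ∣ (-1)^k := by
    rw [← h]
    exact dvd_sub (hd1.mul_left _) (hd2.mul_left _)
  have hu : IsUnit ((-1:ℤ)^k) := (isUnit_one.neg).pow k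
  have : IsUnit ((Int.gcd (cfT a k) (cfT a (k+1)) : ℤ)) := isUnit_of_dvd_unit hdvd hu
  rcases Int.isUnit_iff.mp this with h1 | h1 <;> omega

private lemma mod4_mod2_one {x y : ℤ} (h : x % 4 = y % 4) (hx : x % 2 = 1) : y % 2 = 1 := by omega
private lemma mod4_mod2_zero {x y : ℤ} (h : x % 4 = y % 4) (hx : x % 2 = 0) : y % 2 = 0 := by omega
private lemma parity_of_dvd_sub {u v : ℤ} (h : (2:ℤ) ∣ u - v) (hu : u % 2 = 1) : v % 2 = 1 := by omega
private lemma lt_of_le_parity {x y : ℤ} (h : x ≤ y) (hx : x % 2 = 1) (hy : y % 2 = 0) : x < y := by omega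
private lemma odd_of_coprime_even {x y : ℤ} (hg : Int.gcd y x = 1) (hx : x % 2 = 0)
    (hy : y % 2 = 0) : False := by
  have d2 : (2:ℤ) ∣ x := Int.dvd_of_emod_eq_zero hx
  have d3 : (2:ℤ) ∣ y := Int.dvd_of_emod_eq_zero hy
  have hd := Int.dvd_coe_gcd d3 d2
  rw [hg] at hd
  omega

private lemma natAbs_mod2_zero {x : ℤ} (h : x % 2 = 0) : x.natAbs % 2 = 0 := by omega
private lemma natAbs_mod2_one {x : ℤ} (h : x % 2 = 1) : x.natAbs % 2 = 1 := by omega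
private lemma natAbs_mod4_eq {x y : ℤ} (hx : 0 ≤ x) (hy : 0 ≤ y) (h : x % 4 = y % 4) :
    x.natAbs % 4 = y.natAbs % 4 := by omega
private lemma natAbs_lt_natAbs {x y : ℤ} (hx : 0 ≤ x) (h : x < y) :
    x.natAbs < y.natAbs := by omega
private lemma key (a b : ℕ → ℤ) (ha : ∀ i, 1 ≤ i → 0 < a i) (hb : ∀ i, 1 ≤ i → 0 < b i)
    (hab : ∀ i, a i ≡ b i [ZMOD 4]) : ∀ k,
    (cfT a k ≡ cfT b k [ZMOD 4]) ∧ (cfT a (k+1) ≡ cfT b (k+1) [ZMOD 4]) ∧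
    ((cfT a (k+1)) % 2 = 1 →
      jacobiSym (cfT a k) (cfT a (k+1)).natAbs = jacobiSym (cfT b k) (cfT b (k+1)).natAbs) ∧
    ((cfT a (k+1)) % 2 = 0 →
      jacobiSym (cfT a (k+1)) (cfT a k).natAbs = jacobiSym (cfT b (k+1)) (cfT b k).natAbs) := by
  intro k
  induction k with
  | zero =>
    refine ⟨Int.ModEq.refl 1, hab 1, fun _ => ?_, fun _ => ?_⟩
    · show jacobiSym 1 (cfT a 1).natAbs = jacobiSym 1 (cfT b 1).natAbs
      rw [jacobiSym.one_left, jacobiSym.one_left]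
    · show jacobiSym (cfT a 1) (1:ℤ).natAbs = jacobiSym (cfT b 1) (1:ℤ).natAbs
      rw [show (1:ℤ).natAbs = 1 from rfl, jacobiSym.one_right, jacobiSym.one_right]
  | succ k ih =>
    obtain ⟨h1, h2, hodd, heven⟩ := ih
    have ht3 : cfT a (k+2) = a (k+2) * cfT a (k+1) + cfT a k := rfl
    have hv3 : cfT b (k+2) = b (k+2) * cfT b (k+1) + cfT b k := rfl
    have p1 : 0 < cfT a k := cfT_pos a ha k
    have p2 : 0 < cfT a (k+1) := cfT_pos a ha (k+1)
    have p3 : 0 < cfT a (k+2) := cfT_pos a ha (k+2)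
    have q1 : 0 < cfT b k := cfT_pos b hb k
    have q2 : 0 < cfT b (k+1) := cfT_pos b hb (k+1)
    have q3 : 0 < cfT b (k+2) := cfT_pos b hb (k+2)
    have h3 : cfT a (k+2) ≡ cfT b (k+2) [ZMOD 4] := by
      rw [ht3, hv3]; exact ((hab (k+2)).mul h2).add h1
    have h1' : cfT a k % 4 = cfT b k % 4 := h1
    have h2' : cfT a (k+1) % 4 = cfT b (k+1) % 4 := h2
    have h3' : cfT a (k+2) % 4 = cfT b (k+2) % 4 := h3
    have hα : a (k+2) % 4 = b (k+2) % 4 := hab (k+2)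
    have hαpos : 0 < a (k+2) := ha (k+2) (Nat.le_add_left 1 (k+1))
    have hβpos : 0 < b (k+2) := hb (k+2) (Nat.le_add_left 1 (k+1))
    have c1 : ((cfT a k).natAbs : ℤ) = cfT a k := Int.natAbs_of_nonneg p1.le
    have c2 : ((cfT a (k+1)).natAbs : ℤ) = cfT a (k+1) := Int.natAbs_of_nonneg p2.le
    have c3 : ((cfT a (k+2)).natAbs : ℤ) = cfT a (k+2) := Int.natAbs_of_nonneg p3.le
    have C1 : ((cfT b k).natAbs : ℤ) = cfT b k := Int.natAbs_of_nonneg q1.le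
    have C2 : ((cfT b (k+1)).natAbs : ℤ) = cfT b (k+1) := Int.natAbs_of_nonneg q2.le
    have C3 : ((cfT b (k+2)).natAbs : ℤ) = cfT b (k+2) := Int.natAbs_of_nonneg q3.le
    refine ⟨h2, h3, ?_, ?_⟩
    · -- t3 odd case
      intro h3o'
      have h3o : cfT a (k+2) % 2 = 1 := h3o'
      have H3o : cfT b (k+2) % 2 = 1 := mod4_mod2_one h3' h3o
      show jacobiSym (cfT a (k+1)) (cfT a (k+2)).natAbs
          = jacobiSym (cfT b (k+1)) (cfT b (k+2)).natAbs
      rw [← c2, ← C2]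
      rcases Int.emod_two_eq (cfT a (k+1)) with ht2p | ht2p
      · -- t2 even
        have HT2p : cfT b (k+1) % 2 = 0 := mod4_mod2_zero h2' ht2p
        have hd2 : (2:ℤ) ∣ cfT a (k+2) - cfT a k := by
          rw [ht3, show a (k+2) * cfT a (k+1) + cfT a k - cfT a k
              = cfT a (k+1) * a (k+2) by ring]
          exact (Int.dvd_of_emod_eq_zero ht2p).mul_right _
        have hD2 : (2:ℤ) ∣ cfT b (k+2) - cfT b k := by
          rw [hv3, show b (k+2) * cfT b (k+1) + cfT b k - cfT b k
              = cfT b (k+1) * b (k+2) by ring]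
          exact (Int.dvd_of_emod_eq_zero HT2p).mul_right _
        have h11 : cfT a k % 2 = 1 := parity_of_dvd_sub hd2 h3o
        have H11 : cfT b k % 2 = 1 := parity_of_dvd_sub hD2 H3o
        have hlt : cfT a k < cfT a (k+1) := lt_of_le_parity (cfT_le a ha k) h11 ht2p
        have Hlt : cfT b k < cfT b (k+1) := lt_of_le_parity (cfT_le b hb k) H11 HT2p
        have f1 : (cfT a (k+1)).natAbs % 2 = 0 := natAbs_mod2_zero ht2p
        have f2 : (cfT b (k+1)).natAbs % 2 = 0 := natAbs_mod2_zero HT2p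
        have f3 : (cfT a k).natAbs % 2 = 1 := natAbs_mod2_one h11
        have f4 : (cfT b k).natAbs % 2 = 1 := natAbs_mod2_one H11
        have f5 : (cfT a (k+2)).natAbs % 2 = 1 := natAbs_mod2_one h3o
        have f6 : (cfT b (k+2)).natAbs % 2 = 1 := natAbs_mod2_one H3o
        have f7 : (cfT a k).natAbs % 4 = (cfT b k).natAbs % 4 := natAbs_mod4_eq p1.le q1.le h1'
        have f8 : (cfT a (k+1)).natAbs % 4 = (cfT b (k+1)).natAbs % 4 := natAbs_mod4_eq p2.le q2.le h2'
        have f9 : (a (k+2)).natAbs % 4 = (b (k+2)).natAbs % 4 := natAbs_mod4_eq hαpos.le hβpos.le hα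
        have f10 : (cfT a k).natAbs < (cfT a (k+1)).natAbs := natAbs_lt_natAbs p1.le hlt
        have f11 : (cfT b k).natAbs < (cfT b (k+1)).natAbs := natAbs_lt_natAbs q1.le Hlt
        have hn3 : (cfT a (k+2)).natAbs
            = (a (k+2)).natAbs * (cfT a (k+1)).natAbs + (cfT a k).natAbs := by
          rw [ht3, Int.natAbs_add_of_nonneg (mul_nonneg hαpos.le p2.le) p1.le, Int.natAbs_mul]
        have hN3 : (cfT b (k+2)).natAbs
            = (b (k+2)).natAbs * (cfT b (k+1)).natAbs + (cfT b k).natAbs := by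
          rw [hv3, Int.natAbs_add_of_nonneg (mul_nonneg hβpos.le q2.le) q1.le, Int.natAbs_mul]
        have hJ0 : jacobiSym (((cfT a (k+1)).natAbs : ℕ) : ℤ) ((cfT a k).natAbs)
            = jacobiSym (((cfT b (k+1)).natAbs : ℕ) : ℤ) ((cfT b k).natAbs) := by
          rw [c2, C2]; exact heven ht2p
        obtain ⟨n1, en1⟩ : ∃ n, n = (cfT a k).natAbs := ⟨_, rfl⟩
        obtain ⟨n2, en2⟩ : ∃ n, n = (cfT a (k+1)).natAbs := ⟨_, rfl⟩
        obtain ⟨n3, en3⟩ : ∃ n, n = (cfT a (k+2)).natAbs := ⟨_, rfl⟩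
        obtain ⟨m1, em1⟩ : ∃ n, n = (cfT b k).natAbs := ⟨_, rfl⟩
        obtain ⟨m2, em2⟩ : ∃ n, n = (cfT b (k+1)).natAbs := ⟨_, rfl⟩
        obtain ⟨m3, em3⟩ : ∃ n, n = (cfT b (k+2)).natAbs := ⟨_, rfl⟩
        obtain ⟨pα, epα⟩ : ∃ n, n = (a (k+2)).natAbs := ⟨_, rfl⟩
        obtain ⟨pβ, epβ⟩ : ∃ n, n = (b (k+2)).natAbs := ⟨_, rfl⟩
        simp only [← en1, ← en2, ← en3, ← em1, ← em2, ← em3, ← epα, ← epβ] at hn3 hN3 hJ0 f1 f2 f3 f4 f5 f6 f7 f8 f9 f10 f11 ⊢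
        exact even_case hn3 hN3 f1 f2 f3 f4 f5 f6 f7 f8 f9 f10 f11 hJ0
      · -- t2 odd
        have HT2p : cfT b (k+1) % 2 = 1 := mod4_mod2_one h2' ht2p
        have g1 : (cfT a (k+1)).natAbs % 2 = 1 := natAbs_mod2_one ht2p
        have g2 : (cfT b (k+1)).natAbs % 2 = 1 := natAbs_mod2_one HT2p
        have g3 : (cfT a (k+2)).natAbs % 2 = 1 := natAbs_mod2_one h3o
        have g4 : (cfT b (k+2)).natAbs % 2 = 1 := natAbs_mod2_one H3o
        have g5 : (cfT a (k+1)).natAbs % 4 = (cfT b (k+1)).natAbs % 4 := natAbs_mod4_eq p2.le q2.le h2'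
        have g6 : (cfT a (k+2)).natAbs % 4 = (cfT b (k+2)).natAbs % 4 := natAbs_mod4_eq p3.le q3.le h3'
        have hm : (((cfT a (k+2)).natAbs : ℤ)) % ((cfT a (k+1)).natAbs : ℤ)
            = ((cfT a k).natAbs : ℤ) % ((cfT a (k+1)).natAbs : ℤ) := by
          rw [c1, c2, c3, ht3, show a (k+2) * cfT a (k+1) + cfT a k
              = cfT a k + cfT a (k+1) * a (k+2) by ring, Int.add_mul_emod_self_left]
        have hM : (((cfT b (k+2)).natAbs : ℤ)) % ((cfT b (k+1)).natAbs : ℤ)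
            = ((cfT b k).natAbs : ℤ) % ((cfT b (k+1)).natAbs : ℤ) := by
          rw [C1, C2, C3, hv3, show b (k+2) * cfT b (k+1) + cfT b k
              = cfT b k + cfT b (k+1) * b (k+2) by ring, Int.add_mul_emod_self_left]
        have hJ0 : jacobiSym (((cfT a k).natAbs : ℕ) : ℤ) ((cfT a (k+1)).natAbs)
            = jacobiSym (((cfT b k).natAbs : ℕ) : ℤ) ((cfT b (k+1)).natAbs) := by
          rw [c1, C1]; exact hodd ht2p
        obtain ⟨n1, en1⟩ : ∃ n, n = (cfT a k).natAbs := ⟨_, rfl⟩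
        obtain ⟨n2, en2⟩ : ∃ n, n = (cfT a (k+1)).natAbs := ⟨_, rfl⟩
        obtain ⟨n3, en3⟩ : ∃ n, n = (cfT a (k+2)).natAbs := ⟨_, rfl⟩
        obtain ⟨m1, em1⟩ : ∃ n, n = (cfT b k).natAbs := ⟨_, rfl⟩
        obtain ⟨m2, em2⟩ : ∃ n, n = (cfT b (k+1)).natAbs := ⟨_, rfl⟩
        obtain ⟨m3, em3⟩ : ∃ n, n = (cfT b (k+2)).natAbs := ⟨_, rfl⟩
        simp only [← en1, ← en2, ← en3, ← em1, ← em2, ← em3] at hm hM hJ0 g1 g2 g3 g4 g5 g6 ⊢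
        exact odd_case g1 g2 g3 g4 g5 g6 hm hM hJ0
    · -- t3 even case
      intro h3e'
      have h3e : cfT a (k+2) % 2 = 0 := h3e'
      show jacobiSym (cfT a (k+2)) (cfT a (k+1)).natAbs
          = jacobiSym (cfT b (k+2)) (cfT b (k+1)).natAbs
      have ht2o : cfT a (k+1) % 2 = 1 := by
        rcases Int.emod_two_eq (cfT a (k+1)) with hp | hp
        · exact absurd (odd_of_coprime_even (cfT_coprime a (k+1)) h3e hp) id
        · exact hp
      have ma : cfT a (k+2) % ((cfT a (k+1)).natAbs : ℤ)
          = cfT a k % ((cfT a (k+1)).natAbs : ℤ) := by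
        rw [c2, ht3, show a (k+2) * cfT a (k+1) + cfT a k
            = cfT a k + cfT a (k+1) * a (k+2) by ring, Int.add_mul_emod_self_left]
      have mb : cfT b (k+2) % ((cfT b (k+1)).natAbs : ℤ)
          = cfT b k % ((cfT b (k+1)).natAbs : ℤ) := by
        rw [C2, hv3, show b (k+2) * cfT b (k+1) + cfT b k
            = cfT b k + cfT b (k+1) * b (k+2) by ring, Int.add_mul_emod_self_left]
      rw [jacobiSym.mod_left' ma, jacobiSym.mod_left' mb]
      exact hodd ht2o
private lemma odd_iff_mod4 {x y : ℤ} (h : x % 4 = y % 4) : Odd x ↔ Odd y := by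
  rw [Int.odd_iff, Int.odd_iff]; omega

private lemma final_step {s' s t1 t2 : ℤ} {j : ℕ} (hdet : s' * t1 - s * t2 = (-1)^j)
    (ht2 : 0 < t2) :
    jacobiSym s' t2.natAbs = jacobiSym ((-1)^j) t2.natAbs * jacobiSym t1 t2.natAbs := by
  have c2 : ((t2.natAbs : ℕ) : ℤ) = t2 := Int.natAbs_of_nonneg ht2.le
  have hg : Int.gcd t1 t2 = 1 := by
    have hd1 : (Int.gcd t1 t2 : ℤ) ∣ t1 := Int.gcd_dvd_left _ _
    have hd2 : (Int.gcd t1 t2 : ℤ) ∣ t2 := Int.gcd_dvd_right _ _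
    have hdvd : (Int.gcd t1 t2 : ℤ) ∣ (-1)^j := by
      rw [← hdet]; exact dvd_sub (hd1.mul_left _) (hd2.mul_left _)
    have hu : IsUnit ((-1:ℤ)^j) := (isUnit_one.neg).pow j
    have : IsUnit ((Int.gcd t1 t2 : ℤ)) := isUnit_of_dvd_unit hdvd hu
    rcases Int.isUnit_iff.mp this with h1 | h1 <;> omega
  have hg2 : Int.gcd t1 ((t2.natAbs : ℕ) : ℤ) = 1 := by rw [c2]; exact hg
  have hsq : jacobiSym t1 t2.natAbs ^ 2 = 1 := jacobiSym.sq_one hg2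
  have key1 : jacobiSym s' t2.natAbs * jacobiSym t1 t2.natAbs
      = jacobiSym ((-1)^j) t2.natAbs := by
    rw [← jacobiSym.mul_left]
    apply jacobiSym.mod_left'
    rw [show s' * t1 = (-1)^j + ((t2.natAbs : ℕ) : ℤ) * s by rw [c2]; linarith,
      Int.add_mul_emod_self_left]
  calc jacobiSym s' t2.natAbs
      = jacobiSym s' t2.natAbs * (jacobiSym t1 t2.natAbs * jacobiSym t1 t2.natAbs) := by
        rw [← sq, hsq, mul_one]
    _ = (jacobiSym s' t2.natAbs * jacobiSym t1 t2.natAbs) * jacobiSym t1 t2.natAbs := by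
        ring
    _ = jacobiSym ((-1)^j) t2.natAbs * jacobiSym t1 t2.natAbs := by rw [key1]

theorem jacobi_symbol_depends_only_on_partial_quotients_mod_four
    (a b : ℕ → ℤ) (ha : ∀ i, 1 ≤ i → 0 < a i) (hb : ∀ i, 1 ≤ i → 0 < b i)
    (hab : ∀ i, a i ≡ b i [ZMOD 4]) (k : ℕ) :
    (Odd (cfT a k) ↔ Odd (cfT b k)) ∧
    (Odd (cfT a k) → Odd (cfT b k) →
      jacobiSym (cfS a k) (cfT a k).natAbs = jacobiSym (cfS b k) (cfT b k).natAbs) := by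
  cases k with
  | zero =>
    constructor
    · show Odd (1:ℤ) ↔ Odd (1:ℤ)
      exact Iff.rfl
    · intro _ _
      show jacobiSym (cfS a 0) (1:ℤ).natAbs = jacobiSym (cfS b 0) (1:ℤ).natAbs
      rw [show (1:ℤ).natAbs = 1 from rfl, jacobiSym.one_right, jacobiSym.one_right]
  | succ j =>
    obtain ⟨h1, h2, hodd, heven⟩ := key a b ha hb hab j
    have p2 : 0 < cfT a (j+1) := cfT_pos a ha (j+1)
    have q2 : 0 < cfT b (j+1) := cfT_pos b hb (j+1)
    have h2' : cfT a (j+1) % 4 = cfT b (j+1) % 4 := h2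
    refine ⟨odd_iff_mod4 h2', ?_⟩
    intro Ha Hb
    have Ha' : cfT a (j+1) % 2 = 1 := Int.odd_iff.mp Ha
    have Hb' : cfT b (j+1) % 2 = 1 := Int.odd_iff.mp Hb
    have hOa : Odd ((cfT a (j+1)).natAbs) := Nat.odd_iff.mpr (natAbs_mod2_one Ha')
    have hOb : Odd ((cfT b (j+1)).natAbs) := Nat.odd_iff.mpr (natAbs_mod2_one Hb')
    rw [final_step (cfDet a j) p2, final_step (cfDet b j) q2]
    congr 1
    · rw [jacobiSym.pow_left, jacobiSym.pow_left, jacobiSym.at_neg_one hOa,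
        jacobiSym.at_neg_one hOb, chi4_congr (natAbs_mod4_eq p2.le q2.le h2')]
    · exact hodd Ha'
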